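/- Let a, b, z be points in hyperbolic 4-space H⁴ realized as the upper half-space model, with d(z, [a,b]) ≤ R where [a,b] is the geodesic segment from a to b. Let L_a and L_b be the vertical geodesic rays from a and b, respectively, to the ideal point ∞. Then min{ d(z, L_a), d(z, L_b) } ≤ 2 + R. -/

import Mathlib

/-- Euclidean distance on `ℝ⁴` (coordinates indexed by `Fin 4`). -/
noncomputable def eDist (x y : Fin 4 → ℝ) : ℝ :=
  Real.sqrt (∑ i, (x i - y i) ^ 2)

/-- Hyperbolic distance in the upper half-space model
`H⁴ = {x : Fin 4 → ℝ | 0 < x 3}`, via the standard identity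
`2·sinh(d(x,y)/2) = |x − y| / √(x₄·y₄)`. -/
noncomputable def hDist (x y : Fin 4 → ℝ) : ℝ :=
  2 * Real.arsinh (eDist x y / (2 * Real.sqrt (x 3 * y 3)))

/-- The vertical geodesic ray from a point `p` of the upper half-space to the
ideal point `∞`: the set of points directly above `p`. -/
def vertRay (p : Fin 4 → ℝ) : Set (Fin 4 → ℝ) :=
  {w | w 0 = p 0 ∧ w 1 = p 1 ∧ w 2 = p 2 ∧ p 3 ≤ w 3}

/-- Hyperbolic distance from a point to a set, `d(z,S) = inf {d(z,s) : s ∈ S}`. -/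
noncomputable def hDistSet (z : Fin 4 → ℝ) (S : Set (Fin 4 → ℝ)) : ℝ :=
  sInf ((hDist z) '' S)

namespace NVRaux
open Real

noncomputable def toE (x : Fin 4 → ℝ) : EuclideanSpace ℝ (Fin 4) :=
  (WithLp.equiv 2 (Fin 4 → ℝ)).symm x

lemma toE_apply (x : Fin 4 → ℝ) (i : Fin 4) : toE x i = x i := rfl

lemma eDist_eq_dist (x y : Fin 4 → ℝ) : eDist x y = dist (toE x) (toE y) := by
  rw [EuclideanSpace.dist_eq]
  unfold eDist
  congr 1
  refine Finset.sum_congr rfl fun i _ => ?_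
  rw [Real.dist_eq, sq_abs]
  rfl
lemma eDist_nonneg (x y : Fin 4 → ℝ) : 0 ≤ eDist x y := Real.sqrt_nonneg _
lemma eDist_sq (x y : Fin 4 → ℝ) : eDist x y ^ 2 = ∑ i, (x i - y i) ^ 2 :=
  Real.sq_sqrt (Finset.sum_nonneg fun i _ => sq_nonneg _)
noncomputable def conj4 (y : Fin 4 → ℝ) : Fin 4 → ℝ := Function.update y 3 (-(y 3))
lemma conj4_three (y : Fin 4 → ℝ) : conj4 y 3 = -(y 3) := by simp [conj4]
lemma conj4_zero (y : Fin 4 → ℝ) : conj4 y 0 = y 0 := by simp [conj4, Function.update]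
lemma conj4_one (y : Fin 4 → ℝ) : conj4 y 1 = y 1 := by simp [conj4, Function.update]
lemma conj4_two (y : Fin 4 → ℝ) : conj4 y 2 = y 2 := by simp [conj4, Function.update]
lemma eDist_conj_sq (x y : Fin 4 → ℝ) :
    eDist x (conj4 y) ^ 2 = eDist x y ^ 2 + 4 * (x 3 * y 3) := by
  rw [eDist_sq, eDist_sq, Fin.sum_univ_four, Fin.sum_univ_four,
    conj4_zero, conj4_one, conj4_two, conj4_three]
  ring
lemma eDist_conj_comm (x y : Fin 4 → ℝ) : eDist x (conj4 y) = eDist y (conj4 x) := by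
  unfold eDist
  congr 1
  rw [Fin.sum_univ_four, Fin.sum_univ_four, conj4_zero, conj4_one, conj4_two, conj4_three,
    conj4_zero, conj4_one, conj4_two, conj4_three]
  ring
lemma eDist_self_conj (y : Fin 4 → ℝ) (hy : 0 < y 3) : eDist y (conj4 y) = 2 * y 3 := by
  unfold eDist
  rw [Fin.sum_univ_four, conj4_zero, conj4_one, conj4_two, conj4_three,
    show (y 0 - y 0) ^ 2 + (y 1 - y 1) ^ 2 + (y 2 - y 2) ^ 2 + (y 3 - -(y 3)) ^ 2
      = (2 * y 3) ^ 2 by ring,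
    Real.sqrt_sq (by positivity)]

lemma hDist_nonneg' (x y : Fin 4 → ℝ) : 0 ≤ hDist x y := by
  have h : 0 ≤ eDist x y / (2 * Real.sqrt (x 3 * y 3)) :=
    div_nonneg (eDist_nonneg x y) (by positivity)
  have := Real.arsinh_nonneg_iff.mpr h
  unfold hDist; linarith

lemma sinh_half (x y : Fin 4 → ℝ) :
    Real.sinh (hDist x y / 2) = eDist x y / (2 * Real.sqrt (x 3 * y 3)) := by
  unfold hDist
  rw [mul_div_cancel_left₀ _ (two_ne_zero), Real.sinh_arsinh]

lemma cosh_half (x y : Fin 4 → ℝ) (hx : 0 < x 3) (hy : 0 < y 3) :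
    Real.cosh (hDist x y / 2) = eDist x (conj4 y) / (2 * Real.sqrt (x 3 * y 3)) := by
  have h1 : Real.cosh (hDist x y / 2) ^ 2
      = (eDist x (conj4 y) / (2 * Real.sqrt (x 3 * y 3))) ^ 2 := by
    rw [Real.cosh_sq', sinh_half, div_pow, div_pow, eDist_conj_sq,
      show (2 * Real.sqrt (x 3 * y 3)) ^ 2 = 4 * (x 3 * y 3) by
        rw [mul_pow, Real.sq_sqrt (by positivity)]; ring]
    field_simp
    ring
  have h2 := congrArg Real.sqrt h1
  rwa [Real.sqrt_sq (Real.cosh_pos _).le,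
    Real.sqrt_sq (div_nonneg (eDist_nonneg _ _) (by positivity))] at h2

lemma sinh_half_add (a w b : Fin 4 → ℝ) (ha : 0 < a 3) (hw : 0 < w 3) (hb : 0 < b 3) :
    Real.sinh ((hDist a w + hDist w b) / 2)
      = (eDist a w * eDist b (conj4 w) + eDist w b * eDist a (conj4 w))
          / (4 * w 3 * Real.sqrt (a 3 * b 3)) := by
  have hs : Real.sqrt (a 3 * w 3) * Real.sqrt (w 3 * b 3) = w 3 * Real.sqrt (a 3 * b 3) := by
    rw [← Real.sqrt_mul (by positivity),
      show a 3 * w 3 * (w 3 * b 3) = w 3 ^ 2 * (a 3 * b 3) by ring,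
      Real.sqrt_mul (sq_nonneg _), Real.sqrt_sq hw.le]
  rw [add_div, Real.sinh_add, sinh_half, sinh_half, cosh_half w b hw hb, cosh_half a w ha hw,
    eDist_conj_comm w b]
  rw [div_mul_div_comm, div_mul_div_comm,
    show 2 * Real.sqrt (a 3 * w 3) * (2 * Real.sqrt (w 3 * b 3))
      = 4 * w 3 * Real.sqrt (a 3 * b 3) by rw [show 2 * Real.sqrt (a 3 * w 3) * (2 * Real.sqrt (w 3 * b 3)) = 4 * (Real.sqrt (a 3 * w 3) * Real.sqrt (w 3 * b 3)) by ring, hs]; ring,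
    ← add_div]
  congr 1
  ring

lemma hDist_triangle (x y z : Fin 4 → ℝ) (hx : 0 < x 3) (hy : 0 < y 3) (hz : 0 < z 3) :
    hDist x z ≤ hDist x y + hDist y z := by
  have hpt := EuclideanGeometry.mul_dist_le_mul_dist_add_mul_dist
    (toE x) (toE y) (toE z) (toE (conj4 y))
  rw [← eDist_eq_dist, ← eDist_eq_dist, ← eDist_eq_dist, ← eDist_eq_dist, ← eDist_eq_dist,
    ← eDist_eq_dist, eDist_self_conj y hy] at hpt
  have key : eDist x z / (2 * Real.sqrt (x 3 * z 3))
      ≤ Real.sinh ((hDist x y + hDist y z) / 2) := by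
    rw [sinh_half_add x y z hx hy hz,
      div_le_div_iff₀ (by positivity) (by positivity)]
    have h3 := mul_le_mul_of_nonneg_right hpt
      (show (0:ℝ) ≤ 2 * Real.sqrt (x 3 * z 3) by positivity)
    calc eDist x z * (4 * y 3 * Real.sqrt (x 3 * z 3))
        = eDist x z * (2 * y 3) * (2 * Real.sqrt (x 3 * z 3)) := by ring
      _ ≤ _ := h3
  have h4 := Real.arsinh_le_arsinh.mpr key
  rw [Real.arsinh_sinh] at h4
  show 2 * Real.arsinh (eDist x z / (2 * Real.sqrt (x 3 * z 3))) ≤ _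
  linarith

lemma ptolemy_eq (a w b : Fin 4 → ℝ) (ha : 0 < a 3) (hw : 0 < w 3) (hb : 0 < b 3)
    (heq : hDist a w + hDist w b = hDist a b) :
    eDist a w * eDist b (conj4 w) + eDist w b * eDist a (conj4 w) = eDist a b * (2 * w 3) := by
  have h1 := sinh_half_add a w b ha hw hb
  rw [heq, sinh_half] at h1
  have hsq : (0:ℝ) < Real.sqrt (a 3 * b 3) := Real.sqrt_pos.mpr (by positivity)
  rw [div_eq_div_iff (by positivity) (by positivity)] at h1
  have h2 : (eDist a w * eDist b (conj4 w) + eDist w b * eDist a (conj4 w))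
        * (2 * Real.sqrt (a 3 * b 3))
      = eDist a b * (2 * w 3) * (2 * Real.sqrt (a 3 * b 3)) := by
    rw [← h1]; ring
  exact mul_right_cancel₀ (by positivity) h2


lemma eDist_conj_expand (x y : Fin 4 → ℝ) :
    eDist x (conj4 y) ^ 2 = (x 0 - y 0) ^ 2 + (x 1 - y 1) ^ 2 + (x 2 - y 2) ^ 2
      + (x 3 + y 3) ^ 2 := by
  rw [eDist_sq, Fin.sum_univ_four, conj4_zero, conj4_one, conj4_two, conj4_three]
  ring

lemma key_disj (a w b : Fin 4 → ℝ) (ha : 0 < a 3) (hw : 0 < w 3) (hb : 0 < b 3)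
    (heq : hDist a w + hDist w b = hDist a b) :
    ((a 0 - w 0) ^ 2 + (a 1 - w 1) ^ 2 + (a 2 - w 2) ^ 2 + a 3 ^ 2 ≤ w 3 ^ 2) ∨
    ((b 0 - w 0) ^ 2 + (b 1 - w 1) ^ 2 + (b 2 - w 2) ^ 2 + b 3 ^ 2 ≤ w 3 ^ 2) := by
  have hpe := ptolemy_eq a w b ha hw hb heq
  set C : EuclideanSpace ℝ (Fin 4) := toE (conj4 w) with hC
  have hne : ∀ x : Fin 4 → ℝ, 0 < x 3 → toE x ≠ C := by
    intro x hx h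
    have h3 : x 3 = conj4 w 3 := congrArg (fun v : EuclideanSpace ℝ (Fin 4) => v 3) h
    rw [conj4_three] at h3
    linarith
  have hAC := hne a ha
  have hWC := hne w hw
  have hBC := hne b hb
  have dAC : dist (toE a) C = eDist a (conj4 w) := (eDist_eq_dist _ _).symm
  have dBC : dist (toE b) C = eDist b (conj4 w) := (eDist_eq_dist _ _).symm
  have dWC : dist (toE w) C = 2 * w 3 := by
    rw [← eDist_eq_dist, eDist_self_conj w hw]
  have hPpos : 0 < eDist a (conj4 w) := by rw [← dAC]; exact dist_pos.mpr hAC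
  have hQpos : 0 < eDist b (conj4 w) := by rw [← dBC]; exact dist_pos.mpr hBC
  set P := eDist a (conj4 w) with hP
  set Q := eDist b (conj4 w) with hQ
  have hd : dist (EuclideanGeometry.inversion C 1 (toE a)) (EuclideanGeometry.inversion C 1 (toE w))
      + dist (EuclideanGeometry.inversion C 1 (toE w)) (EuclideanGeometry.inversion C 1 (toE b))
      = dist (EuclideanGeometry.inversion C 1 (toE a)) (EuclideanGeometry.inversion C 1 (toE b)) := by
    rw [EuclideanGeometry.dist_inversion_inversion hAC hWC,
      EuclideanGeometry.dist_inversion_inversion hWC hBC,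
      EuclideanGeometry.dist_inversion_inversion hAC hBC, one_pow,
      dAC, dBC, dWC, ← eDist_eq_dist, ← eDist_eq_dist, ← eDist_eq_dist]
    rw [div_mul_eq_mul_div, div_mul_eq_mul_div, div_mul_eq_mul_div, one_mul, one_mul, one_mul,
      div_add_div _ _ (by positivity) (by positivity), div_eq_div_iff (by positivity) (by positivity)]
    linear_combination (2 * w 3 * P * Q) * hpe
  have hbtw : Wbtw ℝ _ _ _ := dist_add_dist_eq_iff.mp hd
  obtain ⟨t, ⟨ht0, ht1⟩, hmap⟩ := hbtw
  rw [AffineMap.lineMap_apply_module] at hmap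
  -- coordinate-3 expansion of inversion
  have expand : ∀ x : Fin 4 → ℝ,
      EuclideanGeometry.inversion C 1 (toE x) 3
        = (1 / eDist x (conj4 w)) ^ 2 * (x 3 + w 3) - w 3 := by
    intro x
    rw [EuclideanGeometry.inversion, vadd_eq_add, vsub_eq_sub, hC, ← eDist_eq_dist]
    rw [PiLp.add_apply, PiLp.smul_apply, PiLp.sub_apply, toE_apply, toE_apply, conj4_three,
      smul_eq_mul]
    ring
  have h3 : ((1 - t) • EuclideanGeometry.inversion C 1 (toE a)
      + t • EuclideanGeometry.inversion C 1 (toE b)) 3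
      = EuclideanGeometry.inversion C 1 (toE w) 3 := congrArg (fun v : EuclideanSpace ℝ (Fin 4) => v 3) hmap
  rw [PiLp.add_apply, PiLp.smul_apply, PiLp.smul_apply, smul_eq_mul, smul_eq_mul,
    expand a, expand b, expand w, eDist_self_conj w hw] at h3
  -- now pure algebra
  set lam := (1 - t) / P ^ 2 with hlam
  set mu := t / Q ^ 2 with hmu
  have hlam0 : 0 ≤ lam := div_nonneg (by linarith) (by positivity)
  have hmu0 : 0 ≤ mu := div_nonneg ht0 (by positivity)
  have e1 : lam * P ^ 2 + mu * Q ^ 2 = 1 := by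
    rw [hlam, hmu]; field_simp; ring
  have hrhs : (1 / (2 * w 3)) ^ 2 * (w 3 + w 3) - w 3 = 1 / (2 * w 3) - w 3 := by
    have hw' : w 3 ≠ 0 := hw.ne'
    field_simp
    ring
  rw [hrhs] at h3
  have e2 : lam * (a 3 + w 3) + mu * (b 3 + w 3) = 1 / (2 * w 3) := by
    rw [hlam, hmu, hP, hQ]
    linear_combination h3
  have e2b : 2 * w 3 * (lam * (a 3 + w 3) + mu * (b 3 + w 3)) = 1 := by
    rw [e2]; field_simp
  by_contra hcon
  push_neg at hcon
  obtain ⟨h1, h2⟩ := hcon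
  have ePa : P ^ 2 = (a 0 - w 0) ^ 2 + (a 1 - w 1) ^ 2 + (a 2 - w 2) ^ 2 + (a 3 + w 3) ^ 2 :=
    eDist_conj_expand a w
  have ePb : Q ^ 2 = (b 0 - w 0) ^ 2 + (b 1 - w 1) ^ 2 + (b 2 - w 2) ^ 2 + (b 3 + w 3) ^ 2 :=
    eDist_conj_expand b w
  have hXpos : 0 < (a 0 - w 0) ^ 2 + (a 1 - w 1) ^ 2 + (a 2 - w 2) ^ 2 + a 3 ^ 2 - w 3 ^ 2 := by
    linarith
  have hYpos : 0 < (b 0 - w 0) ^ 2 + (b 1 - w 1) ^ 2 + (b 2 - w 2) ^ 2 + b 3 ^ 2 - w 3 ^ 2 := by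
    linarith
  have hS : lam * ((a 0 - w 0) ^ 2 + (a 1 - w 1) ^ 2 + (a 2 - w 2) ^ 2 + a 3 ^ 2 - w 3 ^ 2)
      + mu * ((b 0 - w 0) ^ 2 + (b 1 - w 1) ^ 2 + (b 2 - w 2) ^ 2 + b 3 ^ 2 - w 3 ^ 2) = 0 := by
    linear_combination e1 - e2b - lam * ePa - mu * ePb
  have hprod1 : 0 ≤ lam * ((a 0 - w 0) ^ 2 + (a 1 - w 1) ^ 2 + (a 2 - w 2) ^ 2 + a 3 ^ 2 - w 3 ^ 2) :=
    mul_nonneg hlam0 hXpos.le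
  have hprod2 : 0 ≤ mu * ((b 0 - w 0) ^ 2 + (b 1 - w 1) ^ 2 + (b 2 - w 2) ^ 2 + b 3 ^ 2 - w 3 ^ 2) :=
    mul_nonneg hmu0 hYpos.le
  have hz1 : lam * ((a 0 - w 0) ^ 2 + (a 1 - w 1) ^ 2 + (a 2 - w 2) ^ 2 + a 3 ^ 2 - w 3 ^ 2) = 0 := by
    linarith
  have hz2 : mu * ((b 0 - w 0) ^ 2 + (b 1 - w 1) ^ 2 + (b 2 - w 2) ^ 2 + b 3 ^ 2 - w 3 ^ 2) = 0 := by
    linarith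
  have hlamz : lam = 0 := (mul_eq_zero.mp hz1).resolve_right hXpos.ne'
  have hmuz : mu = 0 := (mul_eq_zero.mp hz2).resolve_right hYpos.ne'
  rw [hlamz, hmuz, zero_mul, zero_mul, add_zero] at e2
  have hpos : 0 < 1 / (2 * w 3) := by positivity
  linarith

lemma ray_bound (z e w : Fin 4 → ℝ) (R : ℝ) (he : 0 < e 3) (hw : 0 < w 3) (hz : 0 < z 3)
    (hcond : (e 0 - w 0) ^ 2 + (e 1 - w 1) ^ 2 + (e 2 - w 2) ^ 2 + e 3 ^ 2 ≤ w 3 ^ 2)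
    (hzw : hDist z w ≤ R) : hDistSet z (vertRay e) ≤ 2 + R := by
  set Pa := (e 0 - w 0) ^ 2 + (e 1 - w 1) ^ 2 + (e 2 - w 2) ^ 2 with hPa
  have hPa0 : 0 ≤ Pa := by rw [hPa]; positivity
  set tt := Real.sqrt (Pa + w 3 ^ 2) with htt
  have htt2 : tt ^ 2 = Pa + w 3 ^ 2 := Real.sq_sqrt (by positivity)
  have htw : w 3 ≤ tt := by
    have h := Real.sqrt_le_sqrt (show w 3 ^ 2 ≤ Pa + w 3 ^ 2 by linarith)
    rwa [Real.sqrt_sq hw.le] at h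
  have httpos : 0 < tt := lt_of_lt_of_le hw htw
  have hPaw : Pa ≤ w 3 ^ 2 := by nlinarith [sq_nonneg (e 3)]
  have htt3 : tt ^ 2 ≤ 2 * w 3 ^ 2 := by linarith
  have he3 : e 3 ≤ w 3 := by nlinarith [sq_nonneg (e 3 + w 3)]
  set w' : Fin 4 → ℝ := Function.update e 3 tt with hw'
  have hw'0 : w' 0 = e 0 := Function.update_of_ne (by decide) _ _
  have hw'1 : w' 1 = e 1 := Function.update_of_ne (by decide) _ _
  have hw'2 : w' 2 = e 2 := Function.update_of_ne (by decide) _ _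
  have hw'3 : w' 3 = tt := Function.update_self _ _ _
  have hmem : w' ∈ vertRay e := ⟨hw'0, hw'1, hw'2, by rw [hw'3]; linarith⟩
  have hx1 : eDist w w' ≤ 2 * Real.sqrt (w 3 * tt) := by
    have hsum : eDist w w' = Real.sqrt (Pa + (w 3 - tt) ^ 2) := by
      unfold eDist
      rw [Fin.sum_univ_four, hw'0, hw'1, hw'2, hw'3, hPa]
      congr 1
      ring
    rw [hsum, show 2 * Real.sqrt (w 3 * tt) = Real.sqrt (4 * (w 3 * tt)) by
      rw [show (4:ℝ) * (w 3 * tt) = 2 ^ 2 * (w 3 * tt) by ring,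
        Real.sqrt_mul (sq_nonneg 2), Real.sqrt_sq (by norm_num : (0:ℝ) ≤ 2)]]
    apply Real.sqrt_le_sqrt
    nlinarith [mul_nonneg (sub_nonneg.mpr htw) hw.le]
  have hhw' : hDist w w' ≤ 2 := by
    have hwt : 0 < w 3 * w' 3 := by rw [hw'3]; positivity
    have hden : 0 < 2 * Real.sqrt (w 3 * w' 3) := by positivity
    have hxle : eDist w w' / (2 * Real.sqrt (w 3 * w' 3)) ≤ 1 := by
      rw [div_le_one hden, hw'3]
      exact hx1
    have hx0 : 0 ≤ eDist w w' / (2 * Real.sqrt (w 3 * w' 3)) :=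
      div_nonneg (eDist_nonneg _ _) hden.le
    have h5 : Real.arsinh (eDist w w' / (2 * Real.sqrt (w 3 * w' 3)))
        ≤ eDist w w' / (2 * Real.sqrt (w 3 * w' 3)) := by
      have h6 := Real.self_le_sinh_iff.mpr hx0
      have h7 := Real.arsinh_le_arsinh.mpr h6
      rwa [Real.arsinh_sinh] at h7
    show 2 * Real.arsinh (eDist w w' / (2 * Real.sqrt (w 3 * w' 3))) ≤ 2
    linarith
  have hzw' : hDist z w' ≤ R + 2 := by
    have := hDist_triangle z w w' hz hw (by rw [hw'3]; exact httpos)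
    linarith
  have hbdd : BddBelow ((hDist z) '' vertRay e) := by
    refine ⟨0, ?_⟩
    rintro y ⟨s, hs, rfl⟩
    exact hDist_nonneg' z s
  have hle := csInf_le hbdd ⟨w', hmem, rfl⟩
  show sInf ((hDist z) '' vertRay e) ≤ 2 + R
  linarith


end NVRaux

/-- Proposition 4 of the paper.  Let `a, b, z` be points of hyperbolic 4-space
(upper half-space model) with `d(z, [a,b]) ≤ R`, where `[a,b]` is the geodesic
segment from `a` to `b` (parametrized by arclength by `γ : [0,T] → H⁴`).  If
`L_a`, `L_b` are the vertical geodesic rays from `a` and `b` to the ideal point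
`∞`, then `min{d(z,L_a), d(z,L_b)} ≤ 2 + R`. -/
theorem near_vertical_ray (a b z : Fin 4 → ℝ)
    (ha : 0 < a 3) (hb : 0 < b 3) (hz : 0 < z 3)
    (γ : ℝ → (Fin 4 → ℝ)) (T : ℝ) (hT : 0 ≤ T)
    (hγpos : ∀ s ∈ Set.Icc 0 T, 0 < γ s 3)
    (hγiso : ∀ s ∈ Set.Icc 0 T, ∀ t ∈ Set.Icc 0 T, hDist (γ s) (γ t) = |s - t|)
    (hγa : γ 0 = a) (hγb : γ T = b)
    (R : ℝ) (hR : 0 ≤ R)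
    (hclose : ∃ s ∈ Set.Icc 0 T, hDist z (γ s) ≤ R) :
    min (hDistSet z (vertRay a)) (hDistSet z (vertRay b)) ≤ 2 + R := by
  obtain ⟨s, hs, hzs⟩ := hclose
  have hw3 := hγpos s hs
  have h0T : (0:ℝ) ∈ Set.Icc 0 T := ⟨le_refl 0, hT⟩
  have hTT : T ∈ Set.Icc 0 T := ⟨hT, le_refl T⟩
  have heq : hDist a (γ s) + hDist (γ s) b = hDist a b := by
    have h1 := hγiso 0 h0T s hs
    have h2 := hγiso s hs T hTT
    have h3 := hγiso 0 h0T T hTT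
    rw [hγa] at h1 h3
    rw [hγb] at h2 h3
    rw [h1, h2, h3, zero_sub, abs_neg, abs_of_nonneg hs.1, zero_sub, abs_neg,
      abs_of_nonneg hT, abs_sub_comm, abs_of_nonneg (sub_nonneg.mpr hs.2)]
    ring
  rcases NVRaux.key_disj a (γ s) b ha hw3 hb heq with h | h
  · exact min_le_of_left_le (NVRaux.ray_bound z a (γ s) R ha hw3 hz h hzs)
  · exact min_le_of_right_le (NVRaux.ray_bound z b (γ s) R hb hw3 hz h hzs)
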